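/- arXiv:2405.14848 — 4 statements merged into one kernel-verified Lean document; each statement's English description precedes it below -/
import Mathlib

section
/- Let G be a finite DAG and let pa(Y) denote the set of parents of Y. If X is not a parent of Y, then every path between X and Y (in the d-separation sense) is blocked by the conditioning set pa(Y): every such path either contains a non-collider vertex in pa(Y), or contains a collider vertex not in pa(Y) having no descendant in pa(Y), provided Y has no descendants. -/
namespace Paper

variable {V : Type*}

/-- Directed edge relation of a graph on vertex type `V`. -/
abbrev Edge (V : Type*) := V → V → Prop

/-- `v` is a descendant of `u`: reachable by a directed path of length ≥ 1. -/
def Desc (E : Edge V) (u v : V) : Prop := Relation.TransGen E u v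

/-- The graph is acyclic: no directed cycles. -/
def Acyclic (E : Edge V) : Prop := ∀ v, ¬ Desc E v v

/-- `l` lists the internal vertices of a directed path from `u` to `v`. -/
def IsDirPath (E : Edge V) (u v : V) (l : List V) : Prop :=
  List.Chain' E (u :: l ++ [v]) ∧ (u :: l ++ [v]).Nodup

/-- Undirected adjacency: an edge in either direction. -/
def Adj (E : Edge V) (u v : V) : Prop := E u v ∨ E v u

/-- `l` lists the internal vertices of a path (edges in either direction) from `u` to `v`. -/
def IsPath (E : Edge V) (u v : V) (l : List V) : Prop :=
  List.Chain' (Adj E) (u :: l ++ [v]) ∧ (u :: l ++ [v]).Nodup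

/-- `w` is a collider on the path with full vertex list `p`:
both adjacent path edges point into `w`. -/
def IsColliderOn (E : Edge V) (p : List V) (w : V) : Prop :=
  ∃ a b, [a, w, b] <:+: p ∧ E a w ∧ E b w

/-- The path from `u` to `v` with internal vertices `l` is blocked by `S`. -/
def Blocked (E : Edge V) (S : Set V) (u v : V) (l : List V) : Prop :=
  (∃ w ∈ l, ¬ IsColliderOn E (u :: l ++ [v]) w ∧ w ∈ S) ∨
  (∃ w ∈ l, IsColliderOn E (u :: l ++ [v]) w ∧ w ∉ S ∧ ∀ d, Desc E w d → d ∉ S)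

/-- `u` and `v` are d-separated given `S`: every path between them is blocked. -/
def DSep (E : Edge V) (S : Set V) (u v : V) : Prop :=
  ∀ l, IsPath E u v l → Blocked E S u v l

/-- The set of parents of `y`. -/
def pa (E : Edge V) (y : V) : Set V := {u | E u y}


lemma split_unique {α : Type*} {w : α} :
    ∀ (l1 : List α) {l2 r1 r2 : List α}, l1 ++ w :: r1 = l2 ++ w :: r2 →
      w ∉ l1 → w ∉ l2 → l1 = l2 ∧ r1 = r2 := by
  intro l1
  induction l1 with
  | nil =>
    intro l2 r1 r2 h h1 h2
    cases l2 with
    | nil => simpa using h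
    | cons a l2 =>
      simp only [List.nil_append, List.cons_append, List.cons.injEq] at h
      exact absurd (h.1 ▸ (@List.mem_cons_self _ a l2)) h2
  | cons a l1 ih =>
    intro l2 r1 r2 h h1 h2
    cases l2 with
    | nil =>
      simp only [List.cons_append, List.nil_append, List.cons.injEq] at h
      exact absurd (h.1 ▸ (@List.mem_cons_self _ a l1)) h1
    | cons b l2 =>
      simp only [List.cons_append, List.cons.injEq] at h
      obtain ⟨rfl, h⟩ := h
      have := ih h (fun hm => h1 (List.mem_cons_of_mem _ hm))
        (fun hm => h2 (List.mem_cons_of_mem _ hm))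
      exact ⟨by rw [this.1], this.2⟩

lemma not_mem_of_nodup_split {α : Type*} {u v : List α} {w : α}
    (h : (u ++ w :: v).Nodup) : w ∉ u := by
  rcases List.nodup_append'.mp h with ⟨-, -, hd⟩
  intro hm
  exact hd hm (@List.mem_cons_self _ w v)

theorem stmt2 [Fintype V] (E : Edge V) (hacy : Acyclic E) (X Y : V)
    (hXY : X ≠ Y) (hY : ∀ v, v ≠ Y → ¬ Desc E Y v)
    (hnotpa : X ∉ pa E Y) :
    DSep E (pa E Y) X Y := by
  intro l hp
  obtain ⟨hchain, hnodup⟩ := hp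
  rcases List.eq_nil_or_concat l with rfl | ⟨l', w, rfl⟩
  · -- path is [X, Y]
    have hadj : Adj E X Y := by
      have h : List.Chain' (Adj E) [X, Y] := by simpa using hchain
      exact List.isChain_pair.mp h
    rcases hadj with h1 | h2
    · exact absurd h1 hnotpa
    · exact absurd (Relation.TransGen.single h2) (hY X hXY)
  · simp only [List.concat_eq_append] at hchain hnodup ⊢
    have hre : X :: (l' ++ [w]) ++ [Y] = (X :: l') ++ [w, Y] := by simp
    rw [hre] at hchain hnodup
    -- last edge is between w and Y
    have hwy : Adj E w Y := by
      have h2 := (List.isChain_append.mp hchain).2.1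
      exact List.isChain_pair.mp h2
    have hwne : w ≠ Y := by
      have := (List.nodup_append'.mp hnodup).2.1
      simpa using this
    have hEwY : E w Y := by
      rcases hwy with h | h
      · exact h
      · exact absurd (Relation.TransGen.single h) (hY w hwne)
    left
    refine ⟨w, by simp, ?_, hEwY⟩
    rintro ⟨a, b, ⟨s, t, hst⟩, haw, hbw⟩
    -- rearrange: from infix, b must be Y
    have heq : (s ++ [a]) ++ w :: (b :: t) = (X :: l') ++ w :: [Y] := by
      have h := hst
      simp only [List.append_assoc, List.cons_append, List.singleton_append,
        List.nil_append] at h ⊢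
      exact h
    have hnm1 : w ∉ s ++ [a] := by
      apply not_mem_of_nodup_split
      rw [show (s ++ [a]) ++ w :: (b :: t) = (X :: l') ++ [w, Y] from heq]
      exact hnodup
    have hnm2 : w ∉ X :: l' := not_mem_of_nodup_split hnodup
    have := (split_unique _ heq hnm1 hnm2).2
    injection this with h1 h2
    subst h1
    exact hY w hwne (Relation.TransGen.single hbw)

end Paper
end

section
/- In a finite DAG where Y has no descendants, X is a parent of Y if and only if X and Y are not d-separated given pa(Y) \ {X}. -/
namespace Paper

variable {V : Type*}

lemma next_unique {p : List V} (hp : p.Nodup) {w b c : V}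
    (h1 : [w, b] <:+: p) (h2 : [w, c] <:+: p) : b = c := by
  induction p with
  | nil => exact absurd (h1.subset (show w ∈ [w, b] by simp)) (List.not_mem_nil)
  | cons x p ih =>
    simp only [List.nodup_cons] at hp
    rcases List.infix_cons_iff.1 h1 with h1p | h1i
    · rcases List.infix_cons_iff.1 h2 with h2p | h2i
      · obtain ⟨t1, ht1⟩ := h1p
        obtain ⟨t2, ht2⟩ := h2p
        simp only [List.cons_append, List.cons.injEq] at ht1 ht2
        have := ht1.2.trans ht2.2.symm
        simp only [List.nil_append, List.cons.injEq] at this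
        exact this.1
      · have hw : w ∈ p := h2i.subset (show w ∈ [w, c] by simp)
        obtain ⟨t1, ht1⟩ := h1p
        simp only [List.cons_append, List.cons.injEq] at ht1
        exact absurd (ht1.1 ▸ hw) hp.1
    · rcases List.infix_cons_iff.1 h2 with h2p | h2i
      · have hw : w ∈ p := h1i.subset (show w ∈ [w, b] by simp)
        obtain ⟨t2, ht2⟩ := h2p
        simp only [List.cons_append, List.cons.injEq] at ht2
        exact absurd (ht2.1 ▸ hw) hp.1
      · exact ih hp.2 h1i h2i


theorem stmt3 [Fintype V] (E : Edge V) (hacy : Acyclic E) (X Y : V)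
    (hXY : X ≠ Y) (hY : ∀ v, v ≠ Y → ¬ Desc E Y v) :
    X ∈ pa E Y ↔ ¬ DSep E (pa E Y \ {X}) X Y := by
  constructor
  · intro hpa hd
    have hp : IsPath E X Y [] := by
      refine ⟨?_, ?_⟩
      · simp [Adj]; exact List.isChain_cons_cons.2 ⟨Or.inl hpa, by simp⟩
      · simp [hXY]
    rcases hd [] hp with ⟨w, hw, _⟩ | ⟨w, hw, _⟩ <;> exact absurd hw (List.not_mem_nil)
  · intro hnd
    by_contra hpa
    apply hnd
    intro l hl
    obtain ⟨hc, hnodup⟩ := hl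
    -- l can't be empty, else E X Y or E Y X
    rcases List.eq_nil_or_concat l with rfl | ⟨l', w, rfl⟩
    · exfalso
      rcases (List.isChain_cons_cons.1 hc).1 with h | h
      · exact hpa h
      · exact hY X hXY (Relation.TransGen.single h)
    · simp only [List.concat_eq_append] at hc hnodup ⊢
      set p : List V := X :: (l' ++ [w]) ++ [Y] with hpdef
      have hwY : [w, Y] <:+: p := by
        refine (List.suffix_iff_eq_append.2 ?_).isInfix
        simp [hpdef]
      have hpnodup : p.Nodup := hnodup
      have hchain : List.Chain' (Adj E) [w, Y] := hc.infix hwY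
      have hadj : Adj E w Y := by
        simpa using List.isChain_cons_cons.1 hchain |>.1
      have hwneY : w ≠ Y := by
        have := Function.mt (fun h : List.Sublist [w, Y] p => List.Nodup.sublist h hpnodup)
        have h2 : [w, Y].Nodup := List.Nodup.sublist hwY.sublist hpnodup
        simpa using h2
      have hEwY : E w Y := by
        rcases hadj with h | h
        · exact h
        · exact absurd (Relation.TransGen.single h) (hY w hwneY)
      have hwneX : w ≠ X := by
        simp only [hpdef, List.cons_append, List.nodup_cons] at hpnodup
        intro h
        exact hpnodup.1 (by simp [← h])
      refine Or.inl ⟨w, by simp, ?_, hEwY, hwneX⟩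
      rintro ⟨a, b, hinf, hEa, hEb⟩
      have hwb : [w, b] <:+: p := by
        obtain ⟨s, t, hst⟩ := hinf
        exact ⟨s ++ [a], t, by rw [hpdef]; simpa using hst⟩
      have hb : b = Y := next_unique hpnodup hwb hwY
      exact hY w hwneY (Relation.TransGen.single (hb ▸ hEb))

end Paper
end

section
/- For a finite DAG G on vertex set {X, Y} ∪ Z with Y having no descendants, the set pa(Y) \ {X} satisfies the generalized backdoor-blocking property: for every vertex M that is a parent of Y lying on a directed path from X to Y, every path between M and Y that starts with an edge into M (a backdoor path from M) is blocked by {X} ∪ (pa(Y) \ {X, M}), assuming all parents of Y are in the observed vertex set. -/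
namespace Paper

variable {V : Type*}

lemma aux_next_eq {α : Type*} : ∀ (s₁ s₂ t₁ t₂ : List α) (u : α),
    s₁ ++ u :: t₁ = s₂ ++ u :: t₂ → (s₁ ++ u :: t₁).Nodup → t₁ = t₂
  | [], [], t₁, t₂, u, h, _ => by simpa using h
  | [], x :: s₂, t₁, t₂, u, h, hn => by
      simp only [List.nil_append, List.cons_append, List.cons.injEq] at h
      obtain ⟨rfl, h2⟩ := h
      rw [List.nil_append, List.nodup_cons] at hn
      exact absurd (h2 ▸ (List.mem_append_right s₂ (List.mem_cons_self))) hn.1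
  | x :: s₁, [], t₁, t₂, u, h, hn => by
      simp only [List.cons_append, List.nil_append, List.cons.injEq] at h
      obtain ⟨rfl, h2⟩ := h
      rw [List.cons_append, List.nodup_cons] at hn
      exact absurd (List.mem_append_right s₁ List.mem_cons_self) hn.1
  | x :: s₁, y :: s₂, t₁, t₂, u, h, hn => by
      simp only [List.cons_append, List.cons.injEq] at h
      rw [List.cons_append, List.nodup_cons] at hn
      exact aux_next_eq s₁ s₂ t₁ t₂ u h.2 hn.2

theorem stmt8 [Fintype V] (E : Edge V) (hacy : Acyclic E) (X Y : V)
    (hY : ∀ v, v ≠ Y → ¬ Desc E Y v)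
    (M : V) (hM : M ∈ pa E Y) (hmed : ∃ l : List V, IsDirPath E X Y l ∧ M ∈ l) :
    ∀ l : List V, IsPath E M Y l →
      E ((l ++ [Y]).head (by simp)) M →
      Blocked E ({X} ∪ (pa E Y \ {X, M})) M Y l := by
  intro l hl hfirst
  rcases l.eq_nil_or_concat with rfl | ⟨l', u, rfl⟩
  · simp only [List.nil_append, List.head_cons] at hfirst
    exact absurd (Relation.TransGen.head hfirst (Relation.TransGen.single hM)) (hacy Y)
  · simp only [List.concat_eq_append] at hl hfirst ⊢
    obtain ⟨hchain, hnodup⟩ := hl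
    have hp : M :: (l' ++ [u]) ++ [Y] = (M :: l') ++ u :: [Y] := by simp
    have hnd : ((M :: l') ++ u :: [Y]).Nodup := hp ▸ hnodup
    rw [List.nodup_append] at hnd
    have huY : u ≠ Y := by
      have := hnd.2.1; simp at this; exact this
    have huM : u ≠ M := fun h =>
      hnd.2.2 M (by simp) u List.mem_cons_self h.symm
    have hchain2 : List.Chain' (Adj E) (u :: [Y]) := by
      have : (u :: [Y]) <:+ ((M :: l') ++ u :: [Y]) := ⟨M :: l', rfl⟩
      exact (hp ▸ hchain).suffix this
    have hEuY : E u Y := by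
      rcases List.isChain_pair.mp hchain2 with h | h
      · exact h
      · exact absurd (Relation.TransGen.single h) (hY u huY)
    left
    refine ⟨u, by simp, ?_, ?_⟩
    · rintro ⟨a, b, ⟨s, t, hst⟩, _, hbu⟩
      have heq : (s ++ [a]) ++ u :: (b :: t) = (M :: l') ++ u :: [Y] := by
        rw [← hp, ← hst]; simp
      have hbt : b :: t = [Y] := aux_next_eq (s ++ [a]) (M :: l') (b :: t) [Y] u heq
        (by rw [heq]; exact hp ▸ hnodup)
      have hb : b = Y := (List.cons.injEq .. ▸ hbt).1
      exact hY u huY (Relation.TransGen.single (hb ▸ hbu))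
    · by_cases hx : u = X
      · exact Or.inl hx
      · exact Or.inr ⟨hEuY, by simp [hx, huM]⟩


end Paper
end

section
/- In a finite DAG with distinguished vertices X and Y where Y has no descendants, every path between X and Y that is not a directed path from X to Y and is not a backdoor path (first edge into X) must contain at least one collider. -/
namespace Paper

variable {V : Type*}

lemma stmt18_aux (E : Edge V) (z : V) :
    ∀ (l : List V) (x y : V), E x y → List.Chain' (Adj E) (y :: l ++ [z]) →
      ¬ List.Chain' E (x :: y :: l ++ [z]) →
      ∃ w ∈ y :: l, ∃ a b, [a, w, b] <:+: (x :: y :: l ++ [z]) ∧ E a w ∧ E b w := by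
  intro l
  induction l with
  | nil =>
    intro x y hxy hchain hnot
    have hyz : Adj E y z := by
      simpa using (List.isChain_cons_cons.mp hchain).1
    rcases hyz with h | h
    · exact absurd (by simp [List.Chain', List.isChain_cons_cons, hxy, h]) hnot
    · exact ⟨y, by simp, x, z, List.infix_refl _, hxy, h⟩
  | cons c l' ih =>
    intro x y hxy hchain hnot
    have hyc : Adj E y c := (List.isChain_cons_cons.mp hchain).1
    by_cases h : E y c
    · have hnot' : ¬ List.Chain' E (y :: c :: l' ++ [z]) := fun hc =>
        hnot (List.isChain_cons_cons.mpr ⟨hxy, hc⟩)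
      obtain ⟨w, hw, a, b, hinf, hab⟩ :=
        ih y c h (List.isChain_cons_cons.mp hchain).2 hnot'
      exact ⟨w, by simpa using Or.inr hw, a, b, hinf.trans (List.suffix_cons x _).isInfix, hab⟩
    · have hcy : E c y := hyc.resolve_left h
      exact ⟨y, by simp, x, c,
        (show [x, y, c] <+: x :: y :: c :: l' ++ [z] from ⟨l' ++ [z], rfl⟩).isInfix,
        hxy, hcy⟩

theorem stmt18 [Fintype V] (E : Edge V) (hacy : Acyclic E) (X Y : V)
    (hY : ∀ v, v ≠ Y → ¬ Desc E Y v) :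
    ∀ l : List V, IsPath E X Y l →
      ¬ List.Chain' E (X :: l ++ [Y]) →
      ¬ E ((l ++ [Y]).head (by simp)) X →
      ∃ w ∈ l, IsColliderOn E (X :: l ++ [Y]) w := by
  intro l hpath hnot hback
  obtain ⟨hchain, _⟩ := hpath
  cases l with
  | nil =>
    simp only [List.nil_append, List.head_cons] at hback
    have : Adj E X Y := by simpa using (List.isChain_cons_cons.mp hchain).1
    rcases this with h | h
    · exact absurd (by simp [List.Chain', List.isChain_cons_cons, h]) hnot
    · exact absurd h hback
  | cons y l' =>
    simp only [List.cons_append, List.head_cons] at hback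
    have hXy : Adj E X y := (List.isChain_cons_cons.mp hchain).1
    have hXy' : E X y := hXy.resolve_right hback
    obtain ⟨w, hw, a, b, hinf, hab⟩ :=
      stmt18_aux E Y l' X y hXy' (List.isChain_cons_cons.mp hchain).2 hnot
    exact ⟨w, hw, a, b, hinf, hab⟩

end Paper
end
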